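/- Let L be a finite monoidal semilattice, viewed as an object of the category of commutative monoids. Then the map a ↦ ↓a = {k ∈ L | k ≤ a} is an isomorphism of lattices from L onto the lattice of normal submonoids of L (the normal subobjects of L in CommMon, ordered by inclusion), with inverse K ↦ max(K). -/

import Mathlib

universe u

/-- A subset `K` of a monoidal semilattice `L` is a *normal submonoid* if it is the kernel
(preimage of the neutral element) of some monoid homomorphism out of `(L, ⊔, ⊥)`. -/
def IsNormalSubmonoidOfSemilattice {L : Type u} [SemilatticeSup L] [OrderBot L]
    (K : Set L) : Prop :=
  ∃ (N : Type u) (_ : Monoid N) (f : L → N),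
    f ⊥ = 1 ∧ (∀ x y : L, f (x ⊔ y) = f x * f y) ∧ K = f ⁻¹' {1}

def upMonoid {L : Type u} [SemilatticeSup L] (a : L) : Monoid {y : L // a ≤ y} where
  mul x y := ⟨x.1 ⊔ y.1, le_trans x.2 le_sup_left⟩
  one := ⟨a, le_refl a⟩
  mul_assoc x y z := Subtype.ext (sup_assoc ..)
  one_mul x := Subtype.ext (sup_eq_right.2 x.2)
  mul_one x := Subtype.ext (sup_eq_left.2 x.2)

lemma Iic_normal {L : Type u} [SemilatticeSup L] [OrderBot L] (a : L) :
    IsNormalSubmonoidOfSemilattice (Set.Iic a) := by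
  refine ⟨{y : L // a ≤ y}, upMonoid a, fun x => ⟨x ⊔ a, le_sup_right⟩, ?_, ?_, ?_⟩
  · exact Subtype.ext (by show (⊥ : L) ⊔ a = a; simp)
  · intro x y
    exact Subtype.ext (by show x ⊔ y ⊔ a = (x ⊔ a) ⊔ (y ⊔ a); rw [sup_sup_sup_comm, sup_idem])
  · ext x
    simp only [Set.mem_Iic, Set.mem_preimage, Set.mem_singleton_iff]
    constructor
    · intro h; exact Subtype.ext (by show x ⊔ a = a; exact sup_eq_right.2 h)
    · intro h
      have : x ⊔ a = a := congrArg Subtype.val h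
      exact sup_eq_right.1 this

lemma normal_eq_Iic {L : Type u} [SemilatticeSup L] [OrderBot L] [Finite L] {K : Set L}
    (hK : IsNormalSubmonoidOfSemilattice K) : ∃ a, K = Set.Iic a := by
  obtain ⟨N, _, f, hbot, hsup, hK⟩ := hK
  subst hK
  have hne : (⊥ : L) ∈ f ⁻¹' {1} := hbot
  obtain ⟨a, ha, hmax⟩ := Set.Finite.exists_maximalFor id _ (Set.toFinite _) ⟨⊥, hne⟩
  refine ⟨a, Set.ext fun x => ?_⟩
  simp only [Set.mem_preimage, Set.mem_singleton_iff, Set.mem_Iic]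
  constructor
  · intro hx
    have hxa : f (x ⊔ a) = 1 := by rw [hsup, hx, ha, one_mul]
    have := hmax hxa le_sup_right
    simp only [id] at this
    exact le_sup_left.trans this
  · intro hx
    have : f a = f x * f a := by rw [← hsup, sup_eq_right.2 hx]
    rw [ha, mul_one] at this
    exact this.symm

theorem stmt10 {L : Type u} [SemilatticeSup L] [OrderBot L] [Finite L] :
    ∃ e : L ≃o {K : Set L // IsNormalSubmonoidOfSemilattice K},
      (∀ a : L, (e a : Set L) = Set.Iic a) ∧
      (∀ K : {K : Set L // IsNormalSubmonoidOfSemilattice K},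
        IsGreatest (K : Set L) (e.symm K)) := by
  classical
  refine ⟨{ toFun := fun a => ⟨Set.Iic a, Iic_normal a⟩
            invFun := fun K => (normal_eq_Iic K.2).choose
            left_inv := fun a => ?_
            right_inv := fun K => ?_
            map_rel_iff' := ?_ }, ?_, ?_⟩
  · exact Set.Iic_injective (normal_eq_Iic (Iic_normal a)).choose_spec.symm
  · exact Subtype.ext (normal_eq_Iic K.2).choose_spec.symm
  · intro a b
    exact Set.Iic_subset_Iic
  · intro a; rfl
  · intro K
    have h := (normal_eq_Iic K.2).choose_spec
    constructor
    · rw [h]; exact Set.self_mem_Iic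
    · intro x hx; rw [h] at hx; exact hx
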